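/- Let $A = k[s,x,y]$, $m \geq 4$, $n = 2m+1$, $g = xy(x-y)(x+y-sy)$, and $f = \sum_{j=2}^{n-1}(-1)^j x^{n+1-j} y^j$. Then $f \notin (x^n, y^n, g)$. -/

import Mathlib

open MvPolynomial

namespace Stmt5Aux

variable {k : Type*} [Field k]

def pc (k : Type*) [Field k] : ℕ → ℕ → k
  | 0 => fun i => if i = 0 then 1 else 0
  | 1 => fun i => if i = 1 then 1 else 0
  | (t+2) => fun i =>
      match i with
      | 0 => pc k t 0
      | (i+1) => pc k (t+1) i + pc k t (i+1) - pc k t i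

def qc (k : Type*) [Field k] (t i : ℕ) : k :=
  ∑ u ∈ Finset.range (t+1), (-1 : k)^u * pc k u i

/-- The sequence `M` solving `S_d(T) M = δ₀`. -/
def M (k : Type*) [Field k] (d : ℕ) (a : ℕ) : k :=
  if h : a < d then 0
  else (if a = d then 1 else 0) -
    ∑ i ∈ (Finset.range d).attach, qc k d i.1 * M k d (a - d + i.1)
termination_by a
decreasing_by
  have hi := Finset.mem_range.mp i.2
  omega

def K (k : Type*) [Field k] (d : ℕ) : ℕ → ℕ → k
  | 0 => fun _ => 0
  | 1 => fun _ => 0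
  | 2 => M k d
  | (i+3) => fun a => K k d (i+2) (a+1) - K k d (i+1) (a+1) + K k d (i+1) a

lemma K_rec (d i a : ℕ) :
    K k d (i+3) a = K k d (i+2) (a+1) - K k d (i+1) (a+1) + K k d (i+1) a := rfl

lemma M_spec (d : ℕ) (hdd : qc k d d = 1) (a : ℕ) :
    ∑ i ∈ Finset.range (d+1), qc k d i * M k d (a+i) = if a = 0 then 1 else 0 := by
  rw [Finset.sum_range_succ, hdd, one_mul]
  rw [M, dif_neg (by omega : ¬ (a + d < d))]
  rw [Finset.sum_attach (Finset.range d) (fun i => qc k d i * M k d (a + d - d + i))]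
  have h1 : a + d - d = a := by omega
  rw [h1]
  have h2 : (if a + d = d then (1:k) else 0) = if a = 0 then 1 else 0 := by
    rcases eq_or_ne a 0 with h | h
    · simp [h]
    · rw [if_neg (by omega), if_neg h]
  rw [h2]
  ring

lemma pc_eq_zero : ∀ t i : ℕ, t < i → pc k t i = 0 := by
  intro t
  induction t using Nat.twoStepInduction with
  | zero => intro i hi; simp [pc]; omega
  | one => intro i hi; simp [pc]; omega
  | more t ih1 ih2 =>
    intro i hi
    match i, hi with
    | (i+1), hi =>
      simp only [pc]
      rw [ih2 _ (by omega), ih1 _ (by omega), ih1 _ (by omega)]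
      ring

lemma pc_diag : ∀ t : ℕ, pc k t t = 1 := by
  intro t
  induction t using Nat.twoStepInduction with
  | zero => simp [pc]
  | one => simp [pc]
  | more t ih1 ih2 =>
    show pc k (t+2) (t+2) = 1
    simp only [pc]
    rw [ih2, pc_eq_zero t (t+2) (by omega), pc_eq_zero t (t+1) (by omega)]
    ring

lemma qc_diag (t : ℕ) : qc k t t = (-1 : k)^t := by
  unfold qc
  rw [Finset.sum_eq_single t]
  · rw [pc_diag, mul_one]
  · intro u hu hne
    rw [pc_eq_zero u t (by simp at hu; omega), mul_zero]
  · intro h; exact absurd (Finset.self_mem_range_succ t) h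

/-- `K (t+2) = P_t(T) · M` -/
lemma K_eq (d : ℕ) : ∀ t a : ℕ,
    K k d (t+2) a = ∑ i ∈ Finset.range (t+1), pc k t i * M k d (a+i) := by
  intro t
  induction t using Nat.twoStepInduction with
  | zero => intro a; simp [K, pc]
  | one =>
    intro a
    show K k d 3 a = _
    rw [K_rec d 0 a]
    simp [K, pc, Finset.sum_range_succ]
  | more t ih1 ih2 =>
    intro a
    show K k d (t+1+3) a = _
    rw [K_rec d (t+1) a, ih2 (a+1), ih1 (a+1), ih1 a]
    have harg : ∀ i : ℕ, a + 1 + i = a + (i + 1) := fun i => by omega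
    -- RHS: peel off the i = 0 term
    rw [Finset.sum_range_succ' (fun i => pc k (t+2) i * M k d (a+i)) (t+2)]
    have hpc0 : pc k (t+2) 0 = pc k t 0 := rfl
    have hpcs : ∀ i : ℕ, pc k (t+2) (i+1) = pc k (t+1) i + pc k t (i+1) - pc k t i :=
      fun i => rfl
    simp only [hpc0, hpcs, harg, sub_mul, add_mul]
    rw [Finset.sum_sub_distrib, Finset.sum_add_distrib]
    -- now identities on the pieces
    have hB : ∑ i ∈ Finset.range (t+2), pc k t (i+1) * M k d (a+(i+1))
        = ∑ i ∈ Finset.range t, pc k t (i+1) * M k d (a+(i+1)) := by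
      rw [Finset.sum_range_succ, Finset.sum_range_succ,
        pc_eq_zero t (t+1) (by omega), pc_eq_zero t (t+2) (by omega)]
      ring
    have hC : ∑ i ∈ Finset.range (t+2), pc k t i * M k d (a+(i+1))
        = ∑ i ∈ Finset.range (t+1), pc k t i * M k d (a+(i+1)) := by
      rw [Finset.sum_range_succ, pc_eq_zero t (t+1) (by omega)]
      ring
    have hD : ∑ i ∈ Finset.range (t+1), pc k t i * M k d (a+i)
        = pc k t 0 * M k d (a+0) + ∑ i ∈ Finset.range t, pc k t (i+1) * M k d (a+(i+1)) := by
      rw [Finset.sum_range_succ' (fun i => pc k t i * M k d (a+i)) t]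
      ring
    rw [hB, hC, hD]
    ring

/-- alternating partial sums of `K` vs `K` itself -/
lemma KG (d : ℕ) : ∀ t a : ℕ,
    (∑ u ∈ Finset.range (t+1), (-1:k)^u * K k d (u+2) (a+1))
      = if t % 2 = 0 then K k d (t+3) a else K k d (t+2) a - K k d (t+2) (a+1) := by
  intro t
  induction t with
  | zero =>
    intro a
    rw [if_pos rfl, Finset.sum_range_one, K_rec d 0 a]
    simp [K]
  | succ t ih =>
    intro a
    rw [Finset.sum_range_succ, ih a]
    rcases Nat.even_or_odd t with he | ho
    · have h0 : t % 2 = 0 := Nat.even_iff.mp he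
      have h1 : ¬ ((t+1) % 2 = 0) := by omega
      rw [if_pos h0, if_neg h1]
      have hs : (-1:k)^(t+1) = -1 := Odd.neg_one_pow (by rw [Nat.odd_iff]; omega)
      rw [hs]
      show K k d (t+3) a + -1 * K k d (t+1+2) (a+1) = K k d (t+1+2) a - K k d (t+1+2) (a+1)
      have : t+1+2 = t+3 := by omega
      rw [this]; ring
    · have h0 : ¬ (t % 2 = 0) := by rw [Nat.odd_iff] at ho; omega
      have h1 : (t+1) % 2 = 0 := by rw [Nat.odd_iff] at ho; omega
      rw [if_neg h0, if_pos h1]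
      have hs : (-1:k)^(t+1) = 1 := Even.neg_one_pow (by rw [Nat.odd_iff] at ho; rw [Nat.even_iff]; omega)
      rw [hs, K_rec d (t+1) a]
      show K k d (t+2) a - K k d (t+2) (a+1) + 1 * K k d (t+3) (a+1)
        = K k d (t+1+2) (a+1) - K k d (t+1+1) (a+1) + K k d (t+1+1) a
      have e1 : t+1+2 = t+3 := by omega
      have e2 : t+1+1 = t+2 := by omega
      rw [e1, e2]; ring

/-- the alternating sum equals `S_t(T)·M` -/
lemma Gs_eq (d t a : ℕ) :
    ∑ u ∈ Finset.range (t+1), (-1:k)^u * K k d (u+2) a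
      = ∑ i ∈ Finset.range (t+1), qc k t i * M k d (a+i) := by
  have h1 : ∀ u ∈ Finset.range (t+1), (-1:k)^u * K k d (u+2) a
      = ∑ i ∈ Finset.range (t+1), (-1:k)^u * pc k u i * M k d (a+i) := by
    intro u hu
    rw [K_eq, Finset.mul_sum]
    simp only [← mul_assoc]
    apply Finset.sum_subset
    · exact Finset.range_subset.mpr (by simp at hu ⊢; omega)
    · intro i hi hni
      simp at hi hni
      rw [pc_eq_zero u i (by omega)]
      ring
  rw [Finset.sum_congr rfl h1, Finset.sum_comm]
  apply Finset.sum_congr rfl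
  intro i _
  rw [qc, Finset.sum_mul]

/-! ### The linear functional on `MvPolynomial (Fin 3) k` -/

open MvPolynomial

def Lw (k : Type*) [Field k] (n c a : ℕ) : k :=
  if c = 0 then 0 else K k (n-3) (n+1-c) a

def wt (k : Type*) [Field k] (n : ℕ) (e : Fin 3 →₀ ℕ) : k :=
  if e 1 + e 2 = n + 1 then Lw k n (e 2) (e 0) else 0

noncomputable def lamF (k : Type*) [Field k] (n : ℕ) : MvPolynomial (Fin 3) k → k :=
  fun p => Finsupp.linearCombination k (wt k n) (AddMonoidAlgebra.coeff p)

variable (n : ℕ)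

lemma lamF_add (p q : MvPolynomial (Fin 3) k) :
    lamF k n (p + q) = lamF k n p + lamF k n q :=
  map_add (Finsupp.linearCombination k (wt k n)) (AddMonoidAlgebra.coeff p) (AddMonoidAlgebra.coeff q)

lemma lamF_sub (p q : MvPolynomial (Fin 3) k) :
    lamF k n (p - q) = lamF k n p - lamF k n q :=
  map_sub (Finsupp.linearCombination k (wt k n)) (AddMonoidAlgebra.coeff p) (AddMonoidAlgebra.coeff q)

lemma lamF_sum {ι : Type*} (s : Finset ι) (F : ι → MvPolynomial (Fin 3) k) :
    lamF k n (∑ i ∈ s, F i) = ∑ i ∈ s, lamF k n (F i) := by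
  unfold lamF
  rw [← map_sum]
  congr 1
  exact map_sum AddMonoidAlgebra.coeffAddEquiv F s

lemma lamF_monomial (e : Fin 3 →₀ ℕ) (c : k) :
    lamF k n (monomial e c) = c * wt k n e := by
  rw [← MvPolynomial.single_eq_monomial]
  show Finsupp.linearCombination k (wt k n) (Finsupp.single e c) = c * wt k n e
  rw [Finsupp.linearCombination_single, smul_eq_mul]

lemma app0 (e : Fin 3 →₀ ℕ) (a b c : ℕ) :
    ((e + (Finsupp.single 0 a + Finsupp.single 1 b + Finsupp.single 2 c) : Fin 3 →₀ ℕ)) 0 = e 0 + a := by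
  simp [Finsupp.single_apply]

lemma app1 (e : Fin 3 →₀ ℕ) (a b c : ℕ) :
    ((e + (Finsupp.single 0 a + Finsupp.single 1 b + Finsupp.single 2 c) : Fin 3 →₀ ℕ)) 1 = e 1 + b := by
  simp [Finsupp.single_apply]

lemma app2 (e : Fin 3 →₀ ℕ) (a b c : ℕ) :
    ((e + (Finsupp.single 0 a + Finsupp.single 1 b + Finsupp.single 2 c) : Fin 3 →₀ ℕ)) 2 = e 2 + c := by
  simp [Finsupp.single_apply]

lemma wt_app (e : Fin 3 →₀ ℕ) (a b c : ℕ) :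
    wt k n (e + (Finsupp.single 0 a + Finsupp.single 1 b + Finsupp.single 2 c))
      = if e 1 + b + (e 2 + c) = n + 1 then Lw k n (e 2 + c) (e 0 + a) else 0 := by
  unfold wt
  rw [app0, app1, app2]

lemma mono_mul_pow (e : Fin 3 →₀ ℕ) (co : k) (a b c : ℕ) :
    (monomial e co : MvPolynomial (Fin 3) k) * (X 0 ^ a * X 1 ^ b * X 2 ^ c)
      = monomial (e + (Finsupp.single 0 a + Finsupp.single 1 b + Finsupp.single 2 c)) co := by
  rw [X_pow_eq_monomial, X_pow_eq_monomial, X_pow_eq_monomial,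
    monomial_mul, monomial_mul, monomial_mul]
  simp only [mul_one, one_mul]

end Stmt5Aux


open Stmt5Aux

/-- With `A = k[s,x,y]`, `m ≥ 4`, `n = 2m+1`, `g = xy(x-y)(x+y-sy)`,
and `f = ∑_{j=2}^{n-1} (-1)^j x^{n+1-j} y^j`, we have `f ∉ (xⁿ, yⁿ, g)`. -/
theorem stmt5 (k : Type*) [Field k]
    (s x y g f : MvPolynomial (Fin 3) k)
    (hs : s = X 0) (hx : x = X 1) (hy : y = X 2)
    (m n : ℕ) (hm : 4 ≤ m) (hn : n = 2 * m + 1)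
    (hg : g = x * y * (x - y) * (x + y - s * y))
    (hf : f = ∑ j ∈ Finset.Icc 2 (n - 1), (-1 : MvPolynomial (Fin 3) k) ^ j * x ^ (n + 1 - j) * y ^ j) :
    f ∉ Ideal.span {x ^ n, y ^ n, g} := by
  intro hmem
  set d : ℕ := n - 3 with hdd
  have hd6 : 6 ≤ d := by omega
  -- key sequence facts
  have hqdd : qc k d d = 1 := by
    rw [qc_diag]
    exact Even.neg_one_pow (by rw [Nat.even_iff]; omega)
  have hGs : ∀ a, (∑ u ∈ Finset.range (d+1), (-1:k)^u * K k d (u+2) a)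
      = if a = 0 then 1 else 0 := fun a => (Gs_eq d d a).trans (M_spec d hqdd a)
  have hKn : ∀ a, K k d (d+3) a = 0 := by
    intro a
    have h := KG (k := k) d d (a := a)
    rw [if_pos (by omega)] at h
    rw [← h, hGs (a+1), if_neg (by omega)]
  -- vanishing on monomial multiples of the generators
  have hmonx : ∀ (e : Fin 3 →₀ ℕ) (c : k), lamF k n (monomial e c * x ^ n) = 0 := by
    intro e c
    rw [hx, show (X 1 : MvPolynomial (Fin 3) k) ^ n = X 0 ^ 0 * X 1 ^ n * X 2 ^ 0 by
      rw [pow_zero, pow_zero, one_mul, mul_one]]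
    rw [mono_mul_pow, lamF_monomial, wt_app]
    by_cases hc : e 1 + n + (e 2 + 0) = n + 1
    · rw [if_pos hc]
      unfold Lw
      have he2 : e 2 + 0 = 0 ∨ e 2 + 0 = 1 := by omega
      rcases he2 with h2 | h2
      · rw [h2, if_pos rfl, mul_zero]
      · rw [h2, if_neg one_ne_zero, show n + 1 - 1 = d + 3 by omega, hKn, mul_zero]
    · rw [if_neg hc, mul_zero]
  have hmony : ∀ (e : Fin 3 →₀ ℕ) (c : k), lamF k n (monomial e c * y ^ n) = 0 := by
    intro e c
    rw [hy, show (X 2 : MvPolynomial (Fin 3) k) ^ n = X 0 ^ 0 * X 1 ^ 0 * X 2 ^ n by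
      rw [pow_zero, pow_zero, one_mul, one_mul]]
    rw [mono_mul_pow, lamF_monomial, wt_app]
    by_cases hc : e 1 + 0 + (e 2 + n) = n + 1
    · rw [if_pos hc]
      unfold Lw
      rw [if_neg (by omega)]
      have he2 : e 2 = 0 ∨ e 2 = 1 := by omega
      rcases he2 with h2 | h2
      · rw [h2, show n + 1 - (0 + n) = 1 by omega]
        show c * K k (n-3) 1 _ = 0
        show c * 0 = 0
        rw [mul_zero]
      · rw [h2, show n + 1 - (1 + n) = 0 by omega]
        show c * K k (n-3) 0 _ = 0
        show c * 0 = 0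
        rw [mul_zero]
    · rw [if_neg hc, mul_zero]
  have hmong : ∀ (e : Fin 3 →₀ ℕ) (c : k), lamF k n (monomial e c * g) = 0 := by
    intro e c
    have hgd : monomial e c * g
        = monomial e c * (X 0 ^ 0 * X 1 ^ 3 * X 2 ^ 1)
          - monomial e c * (X 0 ^ 1 * X 1 ^ 2 * X 2 ^ 2)
          + (monomial e c * (X 0 ^ 1 * X 1 ^ 1 * X 2 ^ 3)
            - monomial e c * (X 0 ^ 0 * X 1 ^ 1 * X 2 ^ 3)) := by
      rw [hg, hs, hx, hy]; ring
    rw [hgd, lamF_add, lamF_sub, lamF_sub]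
    rw [mono_mul_pow, mono_mul_pow, mono_mul_pow, mono_mul_pow,
      lamF_monomial, lamF_monomial, lamF_monomial, lamF_monomial,
      wt_app, wt_app, wt_app, wt_app]
    simp only [Nat.add_zero]
    generalize e 0 = A
    generalize e 1 = B
    generalize e 2 = C
    by_cases hc : B + C = n - 3
    · rw [if_pos (by omega), if_pos (by omega), if_pos (by omega), if_pos (by omega)]
      unfold Lw
      rw [if_neg (by omega), if_neg (by omega), if_neg (by omega), if_neg (by omega)]
      rw [show n + 1 - (C + 1) = (n - 3 - C) + 3 by omega,
        show n + 1 - (C + 2) = (n - 3 - C) + 2 by omega,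
        show n + 1 - (C + 3) = (n - 3 - C) + 1 by omega]
      rw [K_rec (k := k) (n - 3) (n - 3 - C) A]
      ring
    · rw [if_neg (by omega), if_neg (by omega), if_neg (by omega), if_neg (by omega)]
      ring
  -- extend to all multiples
  have hallx : ∀ u : MvPolynomial (Fin 3) k, lamF k n (u * x ^ n) = 0 := by
    intro u
    induction u using MvPolynomial.induction_on' with
    | monomial e c => exact hmonx e c
    | add p q hp hq => rw [add_mul, lamF_add, hp, hq, add_zero]
  have hally : ∀ u : MvPolynomial (Fin 3) k, lamF k n (u * y ^ n) = 0 := by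
    intro u
    induction u using MvPolynomial.induction_on' with
    | monomial e c => exact hmony e c
    | add p q hp hq => rw [add_mul, lamF_add, hp, hq, add_zero]
  have hallg : ∀ u : MvPolynomial (Fin 3) k, lamF k n (u * g) = 0 := by
    intro u
    induction u using MvPolynomial.induction_on' with
    | monomial e c => exact hmong e c
    | add p q hp hq => rw [add_mul, lamF_add, hp, hq, add_zero]
  -- value on f
  have hlf : lamF k n f = 1 := by
    rw [hf, lamF_sum]
    have hterm : ∀ j ∈ Finset.Icc 2 (n-1),
        lamF k n ((-1 : MvPolynomial (Fin 3) k)^j * x^(n+1-j) * y^j)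
          = (-1:k)^j * K k d (n+1-j) 0 := by
      intro j hj
      rw [Finset.mem_Icc] at hj
      have hC : ((-1 : MvPolynomial (Fin 3) k))^j = C ((-1:k)^j) := by
        rw [map_pow, map_neg, map_one]
      rw [hx, hy, mul_assoc, hC, MvPolynomial.C_apply,
        show (X 1 : MvPolynomial (Fin 3) k) ^ (n+1-j) * X 2 ^ j
            = X 0 ^ 0 * X 1 ^ (n+1-j) * X 2 ^ j from by rw [pow_zero, one_mul],
        mono_mul_pow, lamF_monomial, wt_app]
      simp only [Finsupp.coe_zero, Pi.zero_apply, Nat.zero_add, Nat.add_zero]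
      rw [if_pos (by omega)]
      unfold Lw
      rw [if_neg (by omega)]
    rw [Finset.sum_congr rfl hterm]
    have hre : ∑ j ∈ Finset.Icc 2 (n-1), (-1:k)^j * K k d (n+1-j) 0
        = ∑ u ∈ Finset.range (d+1), (-1:k)^u * K k d (u+2) 0 := by
      apply Finset.sum_nbij' (fun j => n-1-j) (fun u => n-1-u)
      · intro a ha; simp only [Finset.mem_Icc] at ha; simp only [Finset.mem_range]; omega
      · intro a ha; simp only [Finset.mem_range] at ha; simp only [Finset.mem_Icc]; omega
      · intro a ha; simp only [Finset.mem_Icc] at ha; omega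
      · intro a ha; simp only [Finset.mem_range] at ha; omega
      · intro a ha
        simp only [Finset.mem_Icc] at ha
        rw [show n+1-a = (n-1-a)+2 by omega]
        congr 1
        rw [neg_one_pow_eq_pow_mod_two, neg_one_pow_eq_pow_mod_two (n := n-1-a)]
        congr 1
        omega
    rw [hre, hGs 0, if_pos rfl]
  -- contradiction
  rw [show ({x ^ n, y ^ n, g} : Set (MvPolynomial (Fin 3) k))
      = insert (x ^ n) (insert (y ^ n) {g}) from rfl] at hmem
  rw [Ideal.mem_span_insert] at hmem
  obtain ⟨a1, z1, hz1, hfeq⟩ := hmem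
  rw [Ideal.mem_span_insert] at hz1
  obtain ⟨a2, z2, hz2, hz1eq⟩ := hz1
  rw [Ideal.mem_span_singleton] at hz2
  obtain ⟨a3, hz2eq⟩ := hz2
  have h0 : lamF k n f = 0 := by
    rw [hfeq, hz1eq, hz2eq, lamF_add, lamF_add, hallx, hally,
      show g * a3 = a3 * g from mul_comm _ _, hallg]
    ring
  rw [h0] at hlf
  exact zero_ne_one hlf
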